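/- Let A be a finite-dimensional commutative associative unital ℂ-algebra with a nondegenerate symmetric bilinear form ⟨·,·⟩ satisfying ⟨x∘y, z⟩ = ⟨x, y∘z⟩ for all x,y,z (a Frobenius algebra). Let n ∈ A be nilpotent, I = (n) the ideal generated by n, and define the bilinear form on I by (x,y)₀ = ⟨x̃, n∘ỹ⟩ where x = n∘x̃, y = n∘ỹ. Then (·,·)₀ is well-defined (independent of the choice of x̃, ỹ), symmetric, and nondegenerate on I. -/
import Mathlib


/-- In a Frobenius algebra `(A, B)` with a nilpotent element `n`,
the pairing `(x,y)₀ := B x̃ (n * ỹ)` (for `x = n * x̃`, `y = n * ỹ`) on the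
principal ideal `I = (n)` is well-defined, symmetric, and nondegenerate. -/
theorem stmt0 {A : Type*} [CommRing A] [Algebra ℂ A] [FiniteDimensional ℂ A]
    (B : A →ₗ[ℂ] A →ₗ[ℂ] ℂ)
    (hsymm : ∀ x y : A, B x y = B y x)
    (hnondeg : ∀ x : A, (∀ y : A, B x y = 0) → x = 0)
    (hfrob : ∀ x y z : A, B (x * y) z = B x (y * z))
    (n : A) (hn : IsNilpotent n) :
    (∀ x₁ x₂ y₁ y₂ : A, n * x₁ = n * x₂ → n * y₁ = n * y₂ →
      B x₁ (n * y₁) = B x₂ (n * y₂)) ∧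
    (∀ x y : A, B x (n * y) = B y (n * x)) ∧
    (∀ x : A, (∀ y : A, B x (n * y) = 0) → n * x = 0) := by
  have key : ∀ x y : A, B x (n * y) = B (n * x) y := by
    intro x y
    rw [← hfrob, mul_comm x n]
  refine ⟨?_, ?_, ?_⟩
  · intro x₁ x₂ y₁ y₂ hx hy
    rw [key, hx, ← key, hy]
  · intro x y
    rw [key, hsymm]
  · intro x h
    have : ∀ y : A, B (n * x) y = 0 := fun y => by rw [← key]; exact h y
    exact hnondeg _ this
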